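/- Let τ̂ : ℝ² → ℝ be convex and positively homogeneous of degree one, and suppose τ̂ satisfies the sharp triangle inequality with constant Δ > 0, i.e. τ̂(x) + τ̂(y) − τ̂(x+y) ≥ Δ·(‖x‖ + ‖y‖ − ‖x+y‖) for all x, y ∈ ℝ². Let w > 0 and let γ : [0, w] → ℝ² be continuously differentiable with derivative γ'. Then ∫₀ʷ τ̂(γ'(s)) ds − τ̂(γ(w) − γ(0)) ≥ Δ·(∫₀ʷ ‖γ'(s)‖ ds − ‖γ(w) − γ(0)‖); in particular, if the length ∫₀ʷ ‖γ'(s)‖ ds strictly exceeds ‖γ(w) − γ(0)‖, then ∫₀ʷ τ̂(γ'(s)) ds > τ̂(γ(w) − γ(0)). -/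

import Mathlib

open scoped RealInnerProductSpace

open MeasureTheory

/-- If `τ̂` satisfies the sharp triangle inequality with constant `Δ > 0`,
then the energy defect of a C¹ curve dominates `Δ` times its length defect; in particular
a curve strictly longer than its chord has strictly larger energy than the chord. -/
theorem curve_energy_defect_ge_length_defect
    (τ : EuclideanSpace ℝ (Fin 2) → ℝ)
    (hconv : ConvexOn ℝ Set.univ τ)
    (hhom : ∀ c : ℝ, 0 ≤ c → ∀ x, τ (c • x) = c * τ x)
    (Δ : ℝ) (hΔ : 0 < Δ)
    (hSTI : ∀ x y : EuclideanSpace ℝ (Fin 2),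
      τ x + τ y - τ (x + y) ≥ Δ * (‖x‖ + ‖y‖ - ‖x + y‖))
    (w : ℝ) (hw : 0 < w)
    (γ γ' : ℝ → EuclideanSpace ℝ (Fin 2))
    (hderiv : ∀ s ∈ Set.Icc (0 : ℝ) w, HasDerivAt γ (γ' s) s)
    (hcont : ContinuousOn γ' (Set.Icc (0 : ℝ) w)) :
    (∫ s in (0 : ℝ)..w, τ (γ' s)) - τ (γ w - γ 0) ≥
        Δ * ((∫ s in (0 : ℝ)..w, ‖γ' s‖) - ‖γ w - γ 0‖) ∧
      ((∫ s in (0 : ℝ)..w, ‖γ' s‖) > ‖γ w - γ 0‖ →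
        (∫ s in (0 : ℝ)..w, τ (γ' s)) > τ (γ w - γ 0)) := by
  -- define φ := τ - Δ‖·‖
  set φ : EuclideanSpace ℝ (Fin 2) → ℝ := fun x => τ x - Δ * ‖x‖ with hφ
  -- φ is subadditive
  have hsub : ∀ x y, φ (x + y) ≤ φ x + φ y := by
    intro x y
    have := hSTI x y
    simp only [hφ]
    nlinarith [norm_add_le x y]
  -- φ is positively homogeneous
  have hφhom : ∀ c : ℝ, 0 ≤ c → ∀ x, φ (c • x) = c * φ x := by
    intro c hc x
    simp only [hφ, hhom c hc x, norm_smul, Real.norm_eq_abs, abs_of_nonneg hc]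
    ring
  -- φ is convex
  have hφconv : ConvexOn ℝ Set.univ φ := by
    refine ⟨convex_univ, ?_⟩
    intro x _ y _ a b ha hb hab
    calc φ (a • x + b • y) ≤ φ (a • x) + φ (b • y) := hsub _ _
    _ = a * φ x + b * φ y := by rw [hφhom a ha, hφhom b hb]
    _ = a • φ x + b • φ y := by simp [smul_eq_mul]
  -- τ and φ are continuous
  have hτcont : Continuous τ := hconv.locallyLipschitz.continuous
  have hφcont : Continuous φ := by
    exact hτcont.sub (continuous_const.mul continuous_norm)
  -- FTC: ∫ γ' = chord
  have hFTC : (∫ s in (0 : ℝ)..w, γ' s) = γ w - γ 0 :=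
    intervalIntegral.integral_eq_sub_of_hasDerivAt
      (fun s hs => hderiv s (by rwa [Set.uIcc_of_le hw.le] at hs))
      (hcont.intervalIntegrable_of_Icc hw.le)
  -- integrability on the restricted measure
  have hIcc : Set.uIcc (0 : ℝ) w = Set.Icc 0 w := Set.uIcc_of_le hw.le
  have hγ'int : IntervalIntegrable γ' volume 0 w :=
    hcont.intervalIntegrable_of_Icc hw.le
  have hτint : IntervalIntegrable (fun s => τ (γ' s)) volume 0 w :=
    (hτcont.comp_continuousOn hcont).intervalIntegrable_of_Icc hw.le
  have hnint : IntervalIntegrable (fun s => ‖γ' s‖) volume 0 w :=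
    hγ'int.norm
  have hφint : IntervalIntegrable (fun s => φ (γ' s)) volume 0 w :=
    (hφcont.comp_continuousOn hcont).intervalIntegrable_of_Icc hw.le
  -- Jensen on the measure volume.restrict (Icc 0 w)
  have μne : NeZero (volume.restrict (Set.Icc (0:ℝ) w)) := by
    constructor
    simp [Measure.restrict_apply_univ, Real.volume_Icc, hw.le]
    positivity
  have hint1 : Integrable γ' (volume.restrict (Set.Icc (0:ℝ) w)) := by
    rw [← MeasureTheory.IntegrableOn, integrableOn_Icc_iff_integrableOn_Ioc]
    simpa [Set.uIoc_of_le hw.le] using hγ'int.def'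
  have hint2 : Integrable (φ ∘ γ') (volume.restrict (Set.Icc (0:ℝ) w)) := by
    rw [← MeasureTheory.IntegrableOn, integrableOn_Icc_iff_integrableOn_Ioc]
    simpa [Function.comp_def, Set.uIoc_of_le hw.le] using hφint.def'
  have hJ := hφconv.map_average_le hφcont.continuousOn isClosed_univ
    (Filter.Eventually.of_forall fun x => Set.mem_univ _) hint1 hint2
  -- rewrite averages
  have hmeas : (volume.restrict (Set.Icc (0:ℝ) w)) Set.univ = ENNReal.ofReal w := by
    simp [Measure.restrict_apply_univ, Real.volume_Icc, hw.le]
  have havg1 : (⨍ x, γ' x ∂(volume.restrict (Set.Icc (0:ℝ) w))) =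
      w⁻¹ • (γ w - γ 0) := by
    rw [average_eq, measureReal_def, hmeas, ← hFTC, intervalIntegral.integral_of_le hw.le,
      MeasureTheory.integral_Ioc_eq_integral_Ioo, ← MeasureTheory.integral_Icc_eq_integral_Ioo]
    congr 1
    rw [ENNReal.toReal_ofReal hw.le]
  have havg2 : (⨍ x, φ (γ' x) ∂(volume.restrict (Set.Icc (0:ℝ) w))) =
      w⁻¹ * (∫ s in (0:ℝ)..w, φ (γ' s)) := by
    rw [average_eq, measureReal_def, hmeas, intervalIntegral.integral_of_le hw.le,
      MeasureTheory.integral_Ioc_eq_integral_Ioo, ← MeasureTheory.integral_Icc_eq_integral_Ioo]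
    rw [ENNReal.toReal_ofReal hw.le]
    simp [smul_eq_mul]
  rw [havg1, havg2, hφhom w⁻¹ (by positivity)] at hJ
  have hkey : φ (γ w - γ 0) ≤ ∫ s in (0:ℝ)..w, φ (γ' s) := by
    have hw' : (0:ℝ) < w⁻¹ := by positivity
    calc φ (γ w - γ 0) = w * (w⁻¹ * φ (γ w - γ 0)) := by field_simp
    _ ≤ w * (w⁻¹ * (∫ s in (0:ℝ)..w, φ (γ' s))) := by
        apply mul_le_mul_of_nonneg_left hJ hw.le
    _ = ∫ s in (0:ℝ)..w, φ (γ' s) := by field_simp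
  -- split the integral of φ
  have hsplit : (∫ s in (0:ℝ)..w, φ (γ' s)) =
      (∫ s in (0:ℝ)..w, τ (γ' s)) - Δ * (∫ s in (0:ℝ)..w, ‖γ' s‖) := by
    simp only [hφ]
    rw [intervalIntegral.integral_sub hτint (hnint.const_mul Δ),
      intervalIntegral.integral_const_mul]
  have hmain : (∫ s in (0 : ℝ)..w, τ (γ' s)) - τ (γ w - γ 0) ≥
      Δ * ((∫ s in (0 : ℝ)..w, ‖γ' s‖) - ‖γ w - γ 0‖) := by
    rw [hsplit] at hkey
    simp only [hφ] at hkey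
    nlinarith
  refine ⟨hmain, fun hlen => ?_⟩
  nlinarith
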